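/- Let E be a complex vector space, F a separating subspace of the conjugate algebraic dual of E, H₁ and H₂ complex Hilbert spaces, and T₁ : H₁ → F, T₂ : H₂ → F weakly continuous linear operators with adjoints T₁* : E → H₁, T₂* : E → H₂. If there exists a constant α ≥ 0 such that ‖T₁* x‖² ≤ α ‖T₂* x‖² for all x ∈ E, then there exists a bounded linear operator D : H₁ → H₂ such that T₁ = T₂ ∘ D and ‖D‖² ≤ α. -/

import Mathlib

/-- **Douglas-type factorization for anti-dual pairs** (Theorem 2.1, (ii) ⇒ (iv) with norm bound).
`p` is the anti-duality pairing of the anti-dual pair ⟨F, E⟩ (linear in the `F`-variable and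
conjugate-linear in the `E`-variable), assumed to separate the points of `E` and of `F`.
`T₁ : H₁ → F`, `T₂ : H₂ → F` are weakly continuous linear operators, encoded together with
their adjoints `T₁adj : E → H₁`, `T₂adj : E → H₂` via the defining identity
`⟨Tⱼ h, x⟩ = ⟪Tⱼ* x, h⟫`. If `‖T₁* x‖² ≤ α ‖T₂* x‖²` for all `x`, then `T₁` factors as
`T₁ = T₂ ∘ D` with a bounded operator `D` satisfying `‖D‖² ≤ α`. -/
theorem stmt_0
    {E F : Type*} [AddCommGroup E] [Module ℂ E] [AddCommGroup F] [Module ℂ F]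
    (p : F →ₗ[ℂ] E →ₗ⋆[ℂ] ℂ)
    (hsepE : ∀ x : E, (∀ f : F, p f x = 0) → x = 0)
    (hsepF : ∀ f : F, (∀ x : E, p f x = 0) → f = 0)
    {H₁ H₂ : Type*} [NormedAddCommGroup H₁] [InnerProductSpace ℂ H₁] [CompleteSpace H₁]
    [NormedAddCommGroup H₂] [InnerProductSpace ℂ H₂] [CompleteSpace H₂]
    (T₁ : H₁ →ₗ[ℂ] F) (T₂ : H₂ →ₗ[ℂ] F)
    (T₁adj : E →ₗ[ℂ] H₁) (T₂adj : E →ₗ[ℂ] H₂)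
    (hadj₁ : ∀ (h : H₁) (x : E), p (T₁ h) x = @inner ℂ _ _ (T₁adj x) h)
    (hadj₂ : ∀ (h : H₂) (x : E), p (T₂ h) x = @inner ℂ _ _ (T₂adj x) h)
    (α : ℝ) (hα : 0 ≤ α)
    (hdom : ∀ x : E, ‖T₁adj x‖ ^ 2 ≤ α * ‖T₂adj x‖ ^ 2) :
    ∃ D : H₁ →L[ℂ] H₂, (∀ h : H₁, T₁ h = T₂ (D h)) ∧ ‖D‖ ^ 2 ≤ α := by
  classical
  -- basic norm inequality
  have hdom' : ∀ x : E, ‖T₁adj x‖ ≤ Real.sqrt α * ‖T₂adj x‖ := by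
    intro x
    have h1 : ‖T₁adj x‖ = Real.sqrt (‖T₁adj x‖ ^ 2) := by
      rw [Real.sqrt_sq (norm_nonneg _)]
    rw [h1]
    calc Real.sqrt (‖T₁adj x‖ ^ 2) ≤ Real.sqrt (α * ‖T₂adj x‖ ^ 2) :=
          Real.sqrt_le_sqrt (hdom x)
      _ = Real.sqrt α * ‖T₂adj x‖ := by
          rw [Real.sqrt_mul hα, Real.sqrt_sq (norm_nonneg _)]
  have hker : LinearMap.ker T₂adj ≤ LinearMap.ker T₁adj := by
    intro x hx
    have hx0 : T₂adj x = 0 := hx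
    have := hdom' x
    rw [hx0, norm_zero, mul_zero] at this
    exact norm_le_zero_iff.mp this
  -- the map φ on the range of T₂adj
  set S : Submodule ℂ H₂ := LinearMap.range T₂adj with hS
  let φ₀ : (E ⧸ LinearMap.ker T₂adj) →ₗ[ℂ] H₁ := (LinearMap.ker T₂adj).liftQ T₁adj hker
  let φ : S →ₗ[ℂ] H₁ := φ₀.comp (T₂adj.quotKerEquivRange.symm : S →ₗ[ℂ] _)
  have hφ : ∀ (x : E), φ ⟨T₂adj x, LinearMap.mem_range_self _ x⟩ = T₁adj x := by
    intro x
    have h1 : T₂adj.quotKerEquivRange.symm ⟨T₂adj x, LinearMap.mem_range_self _ x⟩ =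
        (LinearMap.ker T₂adj).mkQ x := T₂adj.quotKerEquivRange_symm_apply_image x _
    simp only [φ, LinearMap.comp_apply, LinearEquiv.coe_coe, h1]
    rfl
  have hφbound : ∀ v : S, ‖φ v‖ ≤ Real.sqrt α * ‖v‖ := by
    rintro ⟨_, x, rfl⟩
    rw [hφ x]
    exact hdom' x
  let φL : S →L[ℂ] H₁ := φ.mkContinuous (Real.sqrt α) hφbound
  have hφLbound : ‖φL‖ ≤ Real.sqrt α :=
    φ.mkContinuous_norm_le (Real.sqrt_nonneg α) hφbound
  -- the closure of the range
  set K : Submodule ℂ H₂ := S.topologicalClosure with hK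
  haveI : CompleteSpace K := S.isClosed_topologicalClosure.completeSpace_coe
  -- inclusion map S → K
  let eL : S →ₗ[ℂ] K := Submodule.inclusion S.le_topologicalClosure
  have heiso : Isometry eL := AddMonoidHomClass.isometry_of_norm eL (fun v => rfl)
  let e : S →L[ℂ] K := ⟨eL, heiso.continuous⟩
  have hdenseK : DenseRange e := by
    intro k
    rw [mem_closure_iff_nhds]
    intro t ht
    -- use closure_subtype
    have hk : (k : H₂) ∈ closure (S : Set H₂) := k.2
    have : k ∈ closure (Set.range e) := by
      rw [closure_subtype]
      convert hk using 2
      ext y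
      constructor
      · rintro ⟨_, ⟨v, rfl⟩, rfl⟩; exact v.2
      · intro hy; exact ⟨e ⟨y, hy⟩, ⟨⟨y, hy⟩, rfl⟩, rfl⟩
    exact mem_closure_iff_nhds.mp this t ht
  -- extend φL to K
  let ψ : K →L[ℂ] H₁ := φL.extend e
  have hψe : ∀ v : S, ψ (e v) = φL v := fun v =>
    ContinuousLinearMap.extend_eq φL hdenseK heiso.isUniformInducing v
  have hψbound : ∀ k : K, ‖ψ k‖ ≤ Real.sqrt α * ‖k‖ := by
    have hclosed : IsClosed {k : K | ‖ψ k‖ ≤ Real.sqrt α * ‖k‖} :=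
      isClosed_le (ψ.continuous.norm) (continuous_const.mul continuous_norm)
    intro k
    refine isClosed_property hdenseK hclosed (fun v => ?_) k
    rw [hψe v]
    have : ‖e v‖ = ‖v‖ := rfl
    rw [this]
    exact hφbound v
  -- compose with orthogonal projection
  let P : H₂ →L[ℂ] K := Submodule.orthogonalProjectionOnto K
  let C : H₂ →L[ℂ] H₁ := ψ.comp P
  have hC : ∀ x : E, C (T₂adj x) = T₁adj x := by
    intro x
    have hmem : T₂adj x ∈ K := S.le_topologicalClosure (LinearMap.mem_range_self _ x)
    have hP : P (T₂adj x) = ⟨T₂adj x, hmem⟩ :=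
      Subtype.ext (Submodule.starProjection_eq_self_iff.mpr hmem)
    have he' : (⟨T₂adj x, hmem⟩ : K) = e ⟨T₂adj x, LinearMap.mem_range_self _ x⟩ := rfl
    simp only [C, ContinuousLinearMap.comp_apply, hP, he', hψe]
    exact hφ x
  have hCbound : ‖C‖ ≤ Real.sqrt α := by
    refine ContinuousLinearMap.opNorm_le_bound _ (Real.sqrt_nonneg α) (fun h => ?_)
    calc ‖C h‖ = ‖ψ (P h)‖ := rfl
      _ ≤ Real.sqrt α * ‖P h‖ := hψbound _
      _ ≤ Real.sqrt α * ‖h‖ := by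
          gcongr
          simpa using ContinuousLinearMap.le_of_opNorm_le P (Submodule.orthogonalProjectionOnto_norm_le K) h
  -- the operator D
  refine ⟨ContinuousLinearMap.adjoint C, fun h => ?_, ?_⟩
  · -- factorization
    have key : ∀ x : E, p (T₁ h - T₂ (ContinuousLinearMap.adjoint C h)) x = 0 := by
      intro x
      rw [map_sub, LinearMap.sub_apply, hadj₁, hadj₂]
      rw [ContinuousLinearMap.adjoint_inner_right]
      rw [hC x]
      ring
    have := hsepF _ key
    rw [sub_eq_zero] at this
    exact this
  · -- norm bound
    rw [show ‖ContinuousLinearMap.adjoint C‖ = ‖C‖ from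
      (ContinuousLinearMap.adjoint : (H₂ →L[ℂ] H₁) ≃ₗᵢ⋆[ℂ] (H₁ →L[ℂ] H₂)).norm_map C]
    calc ‖C‖ ^ 2 ≤ Real.sqrt α ^ 2 :=
          pow_le_pow_left₀ (norm_nonneg _) hCbound 2
      _ = α := Real.sq_sqrt hα
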